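/- arXiv:0911.3537 — 6 statements merged into one kernel-verified Lean document; each statement's English description precedes it below -/
import Mathlib

section
/- For positive real numbers x and y, the supremum over s ∈ [0,1] of c(s)·x^s·y^{1-s}, where c(s) = s^{-s}(1-s)^{-(1-s)} (with the convention 0^0 = 1), equals x + y. -/
open Real

theorem entropy_sup_eq_add (x y : ℝ) (hx : 0 < x) (hy : 0 < y) :
    sSup ((fun s : ℝ => s ^ (-s) * (1 - s) ^ (-(1 - s)) * x ^ s * y ^ (1 - s)) ''
        Set.Icc (0 : ℝ) 1) = x + y := by
  set f : ℝ → ℝ := fun s => s ^ (-s) * (1 - s) ^ (-(1 - s)) * x ^ s * y ^ (1 - s) with hf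
  have hxy : 0 < x + y := by linarith
  have hub : ∀ s ∈ Set.Icc (0:ℝ) 1, f s ≤ x + y := by
    intro s hs
    obtain ⟨hs0, hs1⟩ := hs
    rcases eq_or_lt_of_le hs0 with h0 | h0
    · simp [hf, ← h0]; linarith
    rcases eq_or_lt_of_le hs1 with h1 | h1
    · simp [hf, h1]; linarith
    · have hs1' : 0 < 1 - s := by linarith
      have key : (x / s) ^ s * (y / (1 - s)) ^ (1 - s) ≤ s * (x/s) + (1-s) * (y/(1-s)) :=
        Real.geom_mean_le_arith_mean2_weighted (le_of_lt h0) (le_of_lt hs1')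
          (by positivity) (by positivity) (by ring)
      have e1 : (x / s) ^ s = x ^ s * s ^ (-s) := by
        rw [Real.div_rpow hx.le hs0, Real.rpow_neg hs0, div_eq_mul_inv]
      have e2 : (y / (1 - s)) ^ (1 - s) = y ^ (1 - s) * (1 - s) ^ (-(1 - s)) := by
        rw [Real.div_rpow hy.le hs1'.le, Real.rpow_neg hs1'.le, div_eq_mul_inv]
      have heq : f s = (x / s) ^ s * (y / (1 - s)) ^ (1 - s) := by
        rw [e1, e2, hf]; ring
      rw [heq]
      calc (x / s) ^ s * (y / (1 - s)) ^ (1 - s) ≤ s * (x/s) + (1-s) * (y/(1-s)) := key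
        _ = x + y := by field_simp
  have hmem : f (x / (x+y)) ∈ f '' Set.Icc (0:ℝ) 1 := by
    refine ⟨x/(x+y), ⟨?_, ?_⟩, rfl⟩
    · positivity
    · rw [div_le_one hxy]; linarith
  have hval : f (x / (x+y)) = x + y := by
    set s := x / (x+y) with hsdef
    have hs0 : 0 < s := by positivity
    have h1s : 1 - s = y / (x + y) := by rw [hsdef]; field_simp; ring
    have hs1 : 0 < 1 - s := by rw [h1s]; positivity
    have hx' : x / s = x + y := by rw [hsdef]; field_simp
    have hy' : y / (1 - s) = x + y := by rw [h1s]; field_simp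
    have e1 : x ^ s * s ^ (-s) = (x+y) ^ s := by
      rw [← hx', Real.div_rpow hx.le hs0.le, Real.rpow_neg hs0.le, div_eq_mul_inv]
    have e2 : y ^ (1-s) * (1-s) ^ (-(1-s)) = (x+y) ^ (1-s) := by
      rw [← hy', Real.div_rpow hy.le hs1.le, Real.rpow_neg hs1.le, div_eq_mul_inv]
    have hfs : f s = (x+y)^s * (x+y)^(1-s) := by rw [← e1, ← e2, hf]; ring
    rw [hfs, ← Real.rpow_add hxy]
    simp
  apply le_antisymm
  · exact csSup_le ⟨_, hmem⟩ (by rintro z ⟨s, hs, rfl⟩; exact hub s hs)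
  · rw [← hval]
    exact le_csSup ⟨x+y, by rintro z ⟨s, hs, rfl⟩; exact hub s hs⟩ hmem
end

section
/- The function c(s) = s^{-s}(1-s)^{-(1-s)} on (0,1) satisfies the functional equation c(u)·c(v)^u = c(uv)·c(w)^{1-uv} where w = u(1-v)/(1-uv), for all u, v ∈ (0,1). -/
open Real

theorem entropy_functional_equation (u v : ℝ) (hu : u ∈ Set.Ioo (0 : ℝ) 1)
    (hv : v ∈ Set.Ioo (0 : ℝ) 1) :
    (u ^ (-u) * (1 - u) ^ (-(1 - u))) * (v ^ (-v) * (1 - v) ^ (-(1 - v))) ^ u =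
      ((u * v) ^ (-(u * v)) * (1 - u * v) ^ (-(1 - u * v))) *
        ((u * (1 - v) / (1 - u * v)) ^ (-(u * (1 - v) / (1 - u * v))) *
          (1 - u * (1 - v) / (1 - u * v)) ^ (-(1 - u * (1 - v) / (1 - u * v)))) ^ (1 - u * v) := by
  obtain ⟨hu0, hu1⟩ := hu
  obtain ⟨hv0, hv1⟩ := hv
  have h1u : (0:ℝ) < 1 - u := by linarith
  have h1v : (0:ℝ) < 1 - v := by linarith
  have h1uv : (0:ℝ) < 1 - u * v := by nlinarith
  have huv0 : (0:ℝ) < u * v := by positivity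
  have hw0 : (0:ℝ) < u * (1 - v) / (1 - u * v) := by positivity
  have hw1 : 1 - u * (1 - v) / (1 - u * v) = (1 - u) / (1 - u * v) := by
    field_simp; ring
  have hw1' : (0:ℝ) < (1 - u) / (1 - u * v) := by positivity
  rw [hw1]
  rw [Real.rpow_def_of_pos hu0, Real.rpow_def_of_pos h1u, Real.rpow_def_of_pos hv0,
    Real.rpow_def_of_pos h1v, Real.rpow_def_of_pos huv0, Real.rpow_def_of_pos h1uv,
    Real.rpow_def_of_pos hw0, Real.rpow_def_of_pos hw1']
  simp only [← Real.exp_add]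
  rw [Real.rpow_def_of_pos (Real.exp_pos _), Real.log_exp]
  simp only [← Real.exp_add]
  rw [Real.rpow_def_of_pos (Real.exp_pos _), Real.log_exp]
  simp only [← Real.exp_add]
  rw [Real.exp_eq_exp,
    Real.log_mul (ne_of_gt hu0) (ne_of_gt hv0),
    Real.log_div (by positivity) (ne_of_gt h1uv),
    Real.log_div (ne_of_gt h1u) (ne_of_gt h1uv),
    Real.log_mul (ne_of_gt hu0) (ne_of_gt h1v)]
  field_simp
  ring
end

section
/- Let H be an abelian group and let K = H ∪ {0} be the monoid obtained by adjoining an absorbing zero. Suppose s : K → K is a bijection with s(0) = 1 (the identity of H) that commutes with all its conjugates under multiplication by elements of H, i.e. s(x·s(y·x⁻¹)) = x·s(s(y)·x⁻¹) for all x ∈ H, y ∈ K. Then the operation x + y defined by x + y = y if x = 0 and x + y = x·s(y·x⁻¹) if x ≠ 0 is commutative and associative with neutral element 0, every element has an additive inverse, and multiplication distributes over it; hence K becomes a field. -/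
/-- Theorem 2.2 (thmsym): a bijection `s` of `K = H ∪ {0}` with `s 0 = 1` commuting with
its conjugates under multiplication by elements of `H` defines a field structure on `K`. -/
theorem symmetry_gives_field {H : Type*} [CommGroup H] (s : WithZero H → WithZero H)
    (hbij : Function.Bijective s) (h0 : s 0 = 1)
    (hcomm : ∀ (x : H) (y : WithZero H),
      s ((x : WithZero H) * s (y * (x : WithZero H)⁻¹)) =
        (x : WithZero H) * s (s y * (x : WithZero H)⁻¹))
    (A : WithZero H → WithZero H → WithZero H)
    (hA0 : ∀ y, A 0 y = y)
    (hA : ∀ x y, x ≠ 0 → A x y = x * s (y * x⁻¹)) :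
    (∀ x y, A x y = A y x) ∧
    (∀ x y z, A (A x y) z = A x (A y z)) ∧
    (∀ x, A x 0 = x) ∧
    (∀ x, ∃ y, A x y = 0) ∧
    (∀ a x y, A (a * x) (a * y) = a * A x y) := by
  have hA1 : ∀ y, A 1 y = s y := fun y => by
    rw [hA 1 y one_ne_zero, inv_one, mul_one, one_mul]
  have hAx0 : ∀ x, A x 0 = x := by
    intro x
    rcases eq_or_ne x 0 with h | h
    · rw [h, hA0]
    · rw [hA x 0 h, zero_mul, h0, mul_one]
  have cancel : ∀ a y x : WithZero H, a ≠ 0 → a * y * (a * x)⁻¹ = y * x⁻¹ := by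
    intro a y x ha
    rw [mul_inv_rev, mul_comm x⁻¹ a⁻¹, ← mul_assoc, mul_assoc a y a⁻¹,
      mul_comm y a⁻¹, ← mul_assoc, mul_inv_cancel₀ ha, one_mul]
  have dist : ∀ a x y, A (a * x) (a * y) = a * A x y := by
    intro a x y
    rcases eq_or_ne a 0 with ha | ha
    · simp [ha, hA0]
    rcases eq_or_ne x 0 with hx | hx
    · simp [hx, hA0]
    · have hax : a * x ≠ 0 := mul_ne_zero ha hx
      rw [hA _ _ hax, hA _ _ hx, cancel a y x ha, mul_assoc]
  have key1 : ∀ x y, s (A x y) = A x (s y) := by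
    intro x y
    rcases eq_or_ne x 0 with h | h
    · rw [h, hA0, hA0]
    · obtain ⟨u, rfl⟩ := WithZero.ne_zero_iff_exists.mp h
      rw [hA _ _ h, hA _ _ h, hcomm u y]
  have sEq : ∀ y, s y = A y 1 := by
    intro y
    calc s y = s (A y 0) := by rw [hAx0]
    _ = A y (s 0) := key1 y 0
    _ = A y 1 := by rw [h0]
  have xyx : ∀ x y : WithZero H, x ≠ 0 → x * (y * x⁻¹) = y := by
    intro x y hx
    rw [mul_comm y x⁻¹, ← mul_assoc, mul_inv_cancel₀ hx, one_mul]
  have comm : ∀ x y, A x y = A y x := by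
    intro x y
    rcases eq_or_ne x 0 with h | h
    · rw [h, hA0, hAx0]
    · rw [hA x y h, sEq (y * x⁻¹)]
      calc x * A (y * x⁻¹) 1 = A (x * (y * x⁻¹)) (x * 1) := (dist _ _ _).symm
      _ = A y x := by rw [xyx x y h, mul_one]
  have key2 : ∀ x y, s (A x y) = A (s x) y := by
    intro x y
    rw [comm x y, key1, comm]
  refine ⟨comm, ?_, hAx0, ?_, dist⟩
  · intro x y z
    rcases eq_or_ne x 0 with h | h
    · rw [h, hA0, hA0]
    · calc A (A x y) z
          = A (x * A 1 (y * x⁻¹)) (x * (z * x⁻¹)) := by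
            rw [hA x y h, hA1, xyx x z h]
        _ = x * A (A 1 (y * x⁻¹)) (z * x⁻¹) := dist _ _ _
        _ = x * s (A (y * x⁻¹) (z * x⁻¹)) := by rw [hA1, key2]
        _ = x * s (A y z * x⁻¹) := by
            rw [mul_comm y x⁻¹, mul_comm z x⁻¹, dist, mul_comm x⁻¹ (A y z)]
        _ = A x (A y z) := (hA x _ h).symm
  · intro x
    rcases eq_or_ne x 0 with h | h
    · exact ⟨0, by rw [h, hA0]⟩
    · obtain ⟨e, he⟩ := hbij.2 0
      refine ⟨x * e, ?_⟩
      rw [hA _ _ h, mul_comm x e, mul_assoc, mul_inv_cancel₀ h, mul_one, he,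
        mul_zero]
end

section
/- Let R be a commutative semiring of characteristic one (1 + 1 = 1) that is multiplicatively cancellative (multiplication by any nonzero element is injective). Then for every natural number n ≥ 1 the map x ↦ x^n is an injective semiring endomorphism of R; in particular (x + y)^n = x^n + y^n for all x, y ∈ R. -/
open Finset

section Aux

variable {R : Type*} [CommSemiring R]

private lemma aux_add_self (hchar : (1 : R) + 1 = 1) (a : R) : a + a = a := by
  have : a + a = (1 + 1) * a := by ring
  rw [this, hchar, one_mul]

private lemma aux_cast (hchar : (1 : R) + 1 = 1) :
    ∀ m : ℕ, 1 ≤ m → ((m : ℕ) : R) = 1 := by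
  intro m hm
  induction m with
  | zero => omega
  | succ k ih =>
    by_cases hk : k = 0
    · simp [hk]
    · have hk1 : 1 ≤ k := by omega
      push_cast
      rw [ih hk1, hchar]

private lemma aux_expand (hchar : (1 : R) + 1 = 1) (x y : R) (n : ℕ) :
    (x + y) ^ n = ∑ i ∈ range (n + 1), x ^ i * y ^ (n - i) := by
  rw [add_pow]
  refine Finset.sum_congr rfl fun k hk => ?_
  have hk' : k ≤ n := by simpa [Nat.lt_succ_iff] using hk
  rw [aux_cast hchar _ (Nat.choose_pos hk'), mul_one]

private lemma aux_absorb (hchar : (1 : R) + 1 = 1) {ι : Type*} [DecidableEq ι]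
    (s : Finset ι) (f : ι → R) {j : ι} (hj : j ∈ s) :
    f j + ∑ i ∈ s, f i = ∑ i ∈ s, f i := by
  rw [← Finset.add_sum_erase s f hj, ← add_assoc, aux_add_self hchar]

private lemma aux_key (hchar : (1 : R) + 1 = 1) (x y : R) (n : ℕ) :
    (x ^ n + y ^ n) * (x + y) ^ n = (x + y) ^ n * (x + y) ^ n := by
  have h2 : (x + y) ^ n * (x + y) ^ n = (x + y) ^ (n + n) := by rw [pow_add]
  rw [h2, aux_expand hchar x y n, aux_expand hchar x y (n + n)]
  set f : ℕ → R := fun j => x ^ j * y ^ (n + n - j) with hf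
  have h1 : x ^ n * ∑ i ∈ range (n + 1), x ^ i * y ^ (n - i)
      = ∑ j ∈ Ico n (n + n + 1), f j := by
    rw [Finset.mul_sum, Finset.sum_Ico_eq_sum_range]
    have : n + n + 1 - n = n + 1 := by omega
    rw [this]
    refine Finset.sum_congr rfl fun i hi => ?_
    have hi' : i ≤ n := by simpa [Nat.lt_succ_iff] using hi
    simp only [hf]
    rw [show n + n - (n + i) = n - i from by omega, pow_add]
    ring
  have h2' : y ^ n * ∑ i ∈ range (n + 1), x ^ i * y ^ (n - i)
      = ∑ j ∈ Ico 0 (n + 1), f j := by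
    rw [Finset.mul_sum, Finset.range_eq_Ico]
    refine Finset.sum_congr rfl fun i hi => ?_
    have hi' : i ≤ n := by simpa [Nat.lt_succ_iff] using (Finset.mem_Ico.mp hi).2
    simp only [hf]
    rw [show n + n - i = n + (n - i) from by omega, pow_add]
    ring
  rw [add_mul, h1, h2']
  rw [Finset.sum_eq_sum_Ico_succ_bot (by omega : n < n + n + 1) f]
  rw [add_assoc, add_comm (∑ j ∈ Ico (n+1) (n+n+1), f j) (∑ j ∈ Ico 0 (n+1), f j)]
  rw [Finset.sum_Ico_consecutive f (by omega : 0 ≤ n + 1) (by omega : n + 1 ≤ n + n + 1)]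
  rw [← Finset.range_eq_Ico]
  exact aux_absorb hchar _ f (Finset.mem_range.mpr (by omega))

private lemma aux_pow_zero
    (hcanc : ∀ r : R, r ≠ 0 → Function.Injective (fun x : R => r * x)) :
    ∀ (m : ℕ) (a : R), a ^ m = 0 → a = 0 ∨ (1 : R) = 0 := by
  intro m
  induction m with
  | zero => intro a h; right; simpa using h
  | succ k ih =>
    intro a h
    by_cases ha : a = 0
    · exact Or.inl ha
    · refine ih a ?_
      have h2 : a * a ^ k = a * 0 := by rw [mul_zero, ← pow_succ']; exact h
      exact hcanc a ha h2

private lemma aux_zero_of_add (hchar : (1 : R) + 1 = 1) (a b : R)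
    (h : a + b = 0) : a = 0 := by
  calc a = a + 0 := (add_zero a).symm
    _ = a + (a + b) := by rw [h]
    _ = (a + a) + b := by ring
    _ = a + b := by rw [aux_add_self hchar]
    _ = 0 := h

private lemma aux_frob (hchar : (1 : R) + 1 = 1)
    (hcanc : ∀ r : R, r ≠ 0 → Function.Injective (fun x : R => r * x))
    (x y : R) (n : ℕ) : (x + y) ^ n = x ^ n + y ^ n := by
  by_cases h : (x + y) ^ n = 0
  · rcases aux_pow_zero hcanc n (x + y) h with h0 | h0
    · have hx : x = 0 := aux_zero_of_add hchar x y h0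
      have hy : y = 0 := by
        rw [add_comm] at h0; exact aux_zero_of_add hchar y x h0
      rw [hx, hy, add_zero, aux_add_self hchar]
    · have hall : ∀ a : R, a = 0 := fun a => by
        calc a = a * 1 := (mul_one a).symm
        _ = a * 0 := by rw [← h0]
        _ = 0 := mul_zero a
      rw [hall ((x+y)^n), hall (x^n + y^n)]
  · have h2 : (x + y) ^ n * (x + y) ^ n = (x + y) ^ n * (x ^ n + y ^ n) := by
      rw [← aux_key hchar x y n]; ring
    exact hcanc _ h h2

end Aux

theorem frobenius_char_one {R : Type*} [CommSemiring R] (hchar : (1 : R) + 1 = 1)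
    (hcanc : ∀ r : R, r ≠ 0 → Function.Injective (fun x : R => r * x)) :
    ∀ n : ℕ, 1 ≤ n →
      Function.Injective (fun x : R => x ^ n) ∧
      (∀ x y : R, (x + y) ^ n = x ^ n + y ^ n) ∧
      (∀ x y : R, (x * y) ^ n = x ^ n * y ^ n) ∧
      (1 : R) ^ n = 1 := by
  intro n hn
  refine ⟨?_, fun x y => aux_frob hchar hcanc x y n, fun x y => mul_pow x y n, one_pow n⟩
  intro x y hxy
  simp only at hxy
  obtain ⟨m, rfl⟩ : ∃ m, n = m + 1 := ⟨n - 1, by omega⟩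
  set g : ℕ → R := fun j => x ^ j * y ^ (m + 1 - j) with hg
  have hxS : x * (x + y) ^ m = ∑ j ∈ Ico 1 (m + 2), g j := by
    rw [aux_expand hchar x y m, Finset.mul_sum, Finset.sum_Ico_eq_sum_range]
    have : m + 2 - 1 = m + 1 := by omega
    rw [this]
    refine Finset.sum_congr rfl fun i hi => ?_
    have hi' : i ≤ m := by simpa [Nat.lt_succ_iff] using hi
    simp only [hg]
    rw [show m + 1 - (1 + i) = m - i from by omega, show 1 + i = i + 1 from by omega]
    ring
  have hyS : y * (x + y) ^ m = ∑ j ∈ Ico 0 (m + 1), g j := by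
    rw [aux_expand hchar x y m, Finset.mul_sum, Finset.range_eq_Ico]
    refine Finset.sum_congr rfl fun i hi => ?_
    have hi' : i ≤ m := by simpa [Nat.lt_succ_iff] using (Finset.mem_Ico.mp hi).2
    simp only [hg]
    rw [show m + 1 - i = (m - i) + 1 from by omega]
    ring
  have hmid : x * (x + y) ^ m = y * (x + y) ^ m := by
    rw [hxS, hyS]
    rw [show m + 2 = (m + 1) + 1 from rfl,
      Finset.sum_Ico_succ_top (by omega : 1 ≤ m + 1) g,
      Finset.sum_eq_sum_Ico_succ_bot (by omega : 0 < m + 1) g]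
    have hgm : g (m + 1) = g 0 := by
      simp only [hg, Nat.sub_self, Nat.sub_zero, pow_zero, mul_one, one_mul]
      exact hxy
    rw [hgm, add_comm]
  by_cases h : (x + y) ^ m = 0
  · rcases aux_pow_zero hcanc m (x + y) h with h0 | h0
    · have hx : x = 0 := aux_zero_of_add hchar x y h0
      have hy : y = 0 := by
        rw [add_comm] at h0; exact aux_zero_of_add hchar y x h0
      rw [hx, hy]
    · calc x = x * 1 := (mul_one x).symm
        _ = x * 0 := by rw [← h0]
        _ = y * 0 := by rw [mul_zero, mul_zero]
        _ = y * 1 := by rw [← h0]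
        _ = y := mul_one y
  · have h2 : (x + y) ^ m * x = (x + y) ^ m * y := by
      rw [mul_comm _ x, mul_comm _ y]; exact hmid
    exact hcanc _ h h2
end

section
/- Let B(n,i) with n ≥ 2 and 1 ≤ i ≤ n-1 be the semiring on {0,1,…,n-1} where x +' y = x+y if x+y ≤ n-1 and otherwise the unique ℓ with i ≤ ℓ ≤ n-1 congruent to x+y modulo m = n-i (similarly for multiplication). If B(n,i) is a semifield (every nonzero element invertible) then n = 2 and i = 1. -/
/-- If the prime semiring `B(n,i)` is a semifield then `n = 2` and `i = 1`.
Here `π k = k` for `k ≤ n - 1` and `π k = i + (k - i) % (n - i)` otherwise, and the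
semifield hypothesis states that every nonzero element of `{0, …, n-1}` has a
multiplicative inverse for the product `x · y := π (x * y)`. -/
theorem Bni_semifield (n i : ℕ) (hn : 2 ≤ n) (hi1 : 1 ≤ i) (hi2 : i ≤ n - 1)
    (π : ℕ → ℕ) (hπ : ∀ k, π k = if k ≤ n - 1 then k else i + (k - i) % (n - i))
    (hinv : ∀ x, 1 ≤ x → x ≤ n - 1 → ∃ y, 1 ≤ y ∧ y ≤ n - 1 ∧ π (x * y) = 1) :
    n = 2 ∧ i = 1 := by
  have hn2 : n = 2 := by
    by_contra hne
    have hn3 : 3 ≤ n := by omega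
    obtain ⟨y, hy1, hy2, hy⟩ := hinv (n - 1) (by omega) le_rfl
    rw [hπ] at hy
    by_cases h : (n - 1) * y ≤ n - 1
    · rw [if_pos h] at hy
      have : n - 1 ≤ (n - 1) * y := Nat.le_mul_of_pos_right _ (by omega)
      omega
    · rw [if_neg h] at hy
      push_neg at h
      have hi : i = 1 := by omega
      subst hi
      have hdvd : (n - 1) ∣ ((n - 1) * y - 1) := by
        have : ((n - 1) * y - 1) % (n - 1) = 0 := by omega
        exact Nat.dvd_of_mod_eq_zero this
      have hdvd2 : (n - 1) ∣ (n - 1) * y := Dvd.intro y rfl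
      have h1 : (n - 1) ∣ 1 := by
        have := Nat.dvd_sub hdvd2 hdvd
        have heq : (n - 1) * y - ((n - 1) * y - 1) = 1 := by
          have : 1 ≤ (n - 1) * y := by omega
          omega
        rwa [heq] at this
      have := Nat.le_of_dvd one_pos h1
      omega
  subst hn2
  omega
end

section
/- Let a > 0. The function f(s, a) = a^s · ∫_a^∞ e^{iu} u^{-s-1} du, initially defined for Re(s) > 0, satisfies the functional equation a·f(s,a) = -i(s+1)·f(s+1,a) + i·e^{ia}, and consequently extends to an entire function of s ∈ ℂ. -/
open Complex MeasureTheory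

namespace FFEaux

lemma integ (a : ℝ) (ha : 0 < a) {s : ℂ} (hs : s.re < -1) :
    IntegrableOn (fun u : ℝ => Complex.exp (Complex.I * u) * (u : ℂ) ^ s) (Set.Ioi a) := by
  have h := integrableOn_Ioi_cpow_of_lt hs ha
  have hm : AEStronglyMeasurable (fun u : ℝ => Complex.exp (Complex.I * u))
      (volume.restrict (Set.Ioi a)) :=
    (Complex.continuous_exp.comp (continuous_const.mul Complex.continuous_ofReal)).aestronglyMeasurable
  refine h.bdd_mul (c := 1) hm (Filter.Eventually.of_forall fun u => ?_)
  rw [Complex.norm_exp]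
  simp

lemma deriv_aux (s : ℂ) {x : ℝ} (hx : 0 < x) :
    HasDerivAt (fun u : ℝ => -Complex.I * Complex.exp (Complex.I * u) * (u : ℂ) ^ (-s - 1))
      (Complex.exp (Complex.I * x) * (x : ℂ) ^ (-s - 1) +
        Complex.I * (s + 1) * (Complex.exp (Complex.I * x) * (x : ℂ) ^ (-s - 2))) x := by
  have h1 : HasDerivAt (fun u : ℝ => Complex.exp (Complex.I * u))
      (Complex.exp (Complex.I * x) * Complex.I) x := by
    have := (((hasDerivAt_id (x : ℂ)).const_mul Complex.I).cexp).comp_ofReal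
    simpa [mul_comm] using this
  have h2 : HasDerivAt (fun u : ℝ => (u : ℂ) ^ (-s - 1))
      ((-s - 1) * (x : ℂ) ^ (-s - 2) * 1) x := by
    have hmem : (x : ℂ) ∈ Complex.slitPlane := Or.inl (by simpa using hx)
    have := ((hasDerivAt_id (x : ℂ)).cpow_const (c := -s - 1) hmem).comp_ofReal
    simpa [show -s - 1 - 1 = -s - 2 by ring] using this
  have h3 := (h1.mul h2).const_mul (-Complex.I)
  simp only [← mul_assoc] at h3
  convert h3 using 1
  · rfl
  · funext u; simp only [Pi.mul_apply]; ring
  linear_combination (Complex.exp (Complex.I * x) * (x : ℂ) ^ (-s - 1)) * (Complex.I_mul_I : Complex.I * Complex.I = -1)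

lemma tendsto_aux (s : ℂ) (hs : 0 < s.re) :
    Filter.Tendsto (fun u : ℝ => -Complex.I * Complex.exp (Complex.I * u) * (u : ℂ) ^ (-s - 1))
      Filter.atTop (nhds 0) := by
  rw [tendsto_zero_iff_norm_tendsto_zero]
  have h0 : Filter.Tendsto (fun u : ℝ => u ^ (-(s.re + 1))) Filter.atTop (nhds 0) :=
    tendsto_rpow_neg_atTop (by linarith)
  refine h0.congr' ?_
  filter_upwards [Filter.eventually_gt_atTop 0] with u hu
  rw [norm_mul, norm_mul,
    Complex.norm_exp, Complex.norm_cpow_eq_rpow_re_of_pos hu,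
    show (-s - 1).re = -(s.re + 1) by simp; ring]
  simp

/-- The functional equation. -/
lemma FE (a : ℝ) (ha : 0 < a) (s : ℂ) (hs : 0 < s.re) :
    (a : ℂ) * ((a : ℂ) ^ s * ∫ u in Set.Ioi a, Complex.exp (Complex.I * u) * (u : ℂ) ^ (-s - 1)) =
      -Complex.I * (s + 1) *
          ((a : ℂ) ^ (s + 1) *
            ∫ u in Set.Ioi a, Complex.exp (Complex.I * u) * (u : ℂ) ^ (-(s + 1) - 1)) +
        Complex.I * Complex.exp (Complex.I * a) := by
  have ha0 : (a : ℂ) ≠ 0 := Complex.ofReal_ne_zero.mpr ha.ne'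
  have int1 : IntegrableOn (fun u : ℝ => Complex.exp (Complex.I * u) * (u : ℂ) ^ (-s - 1))
      (Set.Ioi a) := integ a ha (by simp; linarith)
  have int2 : IntegrableOn (fun u : ℝ => Complex.exp (Complex.I * u) * (u : ℂ) ^ (-s - 2))
      (Set.Ioi a) := integ a ha (by simp; linarith)
  have hFTC := integral_Ioi_of_hasDerivAt_of_tendsto'
    (f := fun u : ℝ => -Complex.I * Complex.exp (Complex.I * u) * (u : ℂ) ^ (-s - 1))
    (f' := fun x : ℝ => Complex.exp (Complex.I * x) * (x : ℂ) ^ (-s - 1) +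
      Complex.I * (s + 1) * (Complex.exp (Complex.I * x) * (x : ℂ) ^ (-s - 2)))
    (fun x hx => deriv_aux s (lt_of_lt_of_le ha hx))
    (int1.add (int2.const_mul _))
    (tendsto_aux s hs)
  have hkey : (∫ u in Set.Ioi a, Complex.exp (Complex.I * u) * (u : ℂ) ^ (-s - 1)) +
      Complex.I * (s + 1) * ∫ u in Set.Ioi a, Complex.exp (Complex.I * u) * (u : ℂ) ^ (-s - 2) =
      Complex.I * Complex.exp (Complex.I * a) * (a : ℂ) ^ (-s - 1) := by
    rw [← integral_const_mul, ← integral_add int1 (int2.const_mul _), hFTC]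
    show (0 : ℂ) - -Complex.I * Complex.exp (Complex.I * a) * (a : ℂ) ^ (-s - 1) = _
    ring
  have hexp : ∀ u : ℝ, Complex.exp (Complex.I * u) * (u : ℂ) ^ (-(s + 1) - 1) =
      Complex.exp (Complex.I * u) * (u : ℂ) ^ (-s - 2) := by
    intro u; congr 1; ring
  simp_rw [hexp]
  have e1 : (a : ℂ) * (a : ℂ) ^ s = (a : ℂ) ^ (s + 1) := by
    rw [Complex.cpow_add _ _ ha0, Complex.cpow_one]; ring
  have e2 : (a : ℂ) ^ (s + 1) * (a : ℂ) ^ (-s - 1) = 1 := by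
    rw [← Complex.cpow_add _ _ ha0, show s + 1 + (-s - 1) = 0 by ring, Complex.cpow_zero]
  set J1 := ∫ u in Set.Ioi a, Complex.exp (Complex.I * u) * (u : ℂ) ^ (-s - 1) with hJ1def
  set J2 := ∫ u in Set.Ioi a, Complex.exp (Complex.I * u) * (u : ℂ) ^ (-s - 2) with hJ2def
  have hJ1 : J1 = Complex.I * Complex.exp (Complex.I * a) * (a : ℂ) ^ (-s - 1)
      - Complex.I * (s + 1) * J2 := by linear_combination hkey
  calc (a : ℂ) * ((a : ℂ) ^ s * J1) = (a : ℂ) ^ (s + 1) * J1 := by rw [← e1]; ring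
    _ = (a : ℂ) ^ (s + 1) * (Complex.I * Complex.exp (Complex.I * a) * (a : ℂ) ^ (-s - 1)
          - Complex.I * (s + 1) * J2) := by rw [hJ1]
    _ = -Complex.I * (s + 1) * ((a : ℂ) ^ (s + 1) * J2) + Complex.I * Complex.exp (Complex.I * a) := by
        linear_combination (Complex.I * Complex.exp (Complex.I * a)) * e2

/-- auxiliary family: `fFE a 0` is `f(·,a)` (expressed via the Mellin transform),
and each successor is given by the functional equation. -/
noncomputable def fFE (a : ℝ) : ℕ → ℂ → ℂ
  | 0 => fun s => (a : ℂ) ^ s *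
      mellin (Set.indicator (Set.Ioi a) (fun u : ℝ => Complex.exp (Complex.I * u))) (-s)
  | (n+1) => fun s => (-Complex.I * (s + 1) * fFE a n (s + 1)
      + Complex.I * Complex.exp (Complex.I * a)) / a

lemma mellin_eq (a : ℝ) (ha : 0 < a) (s : ℂ) :
    mellin (Set.indicator (Set.Ioi a) (fun u : ℝ => Complex.exp (Complex.I * u))) (-s) =
      ∫ u in Set.Ioi a, Complex.exp (Complex.I * u) * (u : ℂ) ^ (-s - 1) := by
  rw [mellin]
  have h : ∀ t : ℝ, ((t : ℂ) ^ (-s - 1)) •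
      (Set.indicator (Set.Ioi a) (fun u : ℝ => Complex.exp (Complex.I * u)) t) =
      Set.indicator (Set.Ioi a) (fun u : ℝ => Complex.exp (Complex.I * u) * (u : ℂ) ^ (-s - 1)) t := by
    intro t
    by_cases ht : t ∈ Set.Ioi a
    · simp [Set.indicator_of_mem ht, mul_comm]
    · simp [Set.indicator_of_notMem ht]
  calc (∫ t in Set.Ioi (0:ℝ), ((t:ℂ) ^ (-s - 1)) •
        Set.indicator (Set.Ioi a) (fun u : ℝ => Complex.exp (Complex.I * u)) t)
      = ∫ t in Set.Ioi (0:ℝ), Set.indicator (Set.Ioi a)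
          (fun u : ℝ => Complex.exp (Complex.I * u) * (u : ℂ) ^ (-s - 1)) t :=
        integral_congr_ae (Filter.Eventually.of_forall h)
    _ = ∫ t in Set.Ioi (0:ℝ) ∩ Set.Ioi a, Complex.exp (Complex.I * t) * (t : ℂ) ^ (-s - 1) := by
        rw [setIntegral_indicator measurableSet_Ioi]
    _ = ∫ t in Set.Ioi a, Complex.exp (Complex.I * t) * (t : ℂ) ^ (-s - 1) := by
        rw [Set.Ioi_inter_Ioi, max_eq_right ha.le]

lemma fFE_zero_eq (a : ℝ) (ha : 0 < a) (s : ℂ) :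
    fFE a 0 s = (a : ℂ) ^ s * ∫ u in Set.Ioi a, Complex.exp (Complex.I * u) * (u : ℂ) ^ (-s - 1) := by
  show (a : ℂ) ^ s * mellin _ (-s) = _
  rw [mellin_eq a ha]

lemma fFE_zero_diff (a : ℝ) (ha : 0 < a) (s : ℂ) (hs : 0 < s.re) :
    DifferentiableAt ℂ (fFE a 0) s := by
  have ha0 : (a : ℂ) ≠ 0 := Complex.ofReal_ne_zero.mpr ha.ne'
  have hmel : DifferentiableAt ℂ
      (mellin (Set.indicator (Set.Ioi a) (fun u : ℝ => Complex.exp (Complex.I * u)))) (-s) := by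
    apply mellin_differentiableAt_of_isBigO_rpow (a := 0) (b := -s.re - 1)
    · rw [locallyIntegrableOn_iff isOpen_Ioi.isLocallyClosed]
      intro k hk hkc
      apply Measure.integrableOn_of_bounded (M := 1) hkc.measure_lt_top.ne
      · exact ((Complex.continuous_exp.comp
          (continuous_const.mul Complex.continuous_ofReal)).measurable.indicator
          measurableSet_Ioi).aestronglyMeasurable
      · refine Filter.Eventually.of_forall fun u => ?_
        refine (norm_indicator_le_norm_self _ _).trans ?_
        rw [Complex.norm_exp]
        simp
    · refine Asymptotics.IsBigO.of_bound 1 ?_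
      filter_upwards [Filter.eventually_ge_atTop (1:ℝ)] with u hu
      rw [neg_zero, Real.rpow_zero, norm_one, mul_one]
      refine (norm_indicator_le_norm_self _ _).trans ?_
      rw [Complex.norm_exp]
      simp
    · simpa using hs
    · refine Asymptotics.IsBigO.of_bound 0 ?_
      filter_upwards [Ioo_mem_nhdsGT_of_mem (Set.mem_Ico.mpr ⟨le_refl (0:ℝ), ha⟩)] with u hu
      rw [Set.indicator_of_notMem (by simpa [Set.mem_Ioi, not_lt] using hu.2.le)]
      simp
    · simp
  have hcomp : DifferentiableAt ℂ (fun z : ℂ =>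
      mellin (Set.indicator (Set.Ioi a) (fun u : ℝ => Complex.exp (Complex.I * u))) (-z)) s :=
    hmel.comp s (differentiable_neg s)
  exact (differentiableAt_id.const_cpow (Or.inl ha0)).mul hcomp

lemma fFE_diff (a : ℝ) (ha : 0 < a) :
    ∀ n : ℕ, ∀ s : ℂ, -(n : ℝ) < s.re → DifferentiableAt ℂ (fFE a n) s := by
  intro n
  induction n with
  | zero => intro s hs; exact fFE_zero_diff a ha s (by simpa using hs)
  | succ n ih =>
    intro s hs
    have h1 : DifferentiableAt ℂ (fun z : ℂ => fFE a n (z + 1)) s := by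
      have := (ih (s + 1) (by simp at hs ⊢; push_cast; linarith [hs])).comp s
        ((differentiableAt_id.add (differentiableAt_const 1)))
      exact this
    show DifferentiableAt ℂ (fun z : ℂ => (-Complex.I * (z + 1) * fFE a n (z + 1)
      + Complex.I * Complex.exp (Complex.I * a)) / a) s
    apply DifferentiableAt.div_const
    exact (((differentiableAt_const _).mul (differentiableAt_id.add
      (differentiableAt_const 1))).mul h1).add (differentiableAt_const _)

lemma fFE_succ_eq (a : ℝ) (ha : 0 < a) :
    ∀ n : ℕ, ∀ s : ℂ, -(n : ℝ) < s.re → fFE a (n + 1) s = fFE a n s := by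
  have ha0 : (a : ℂ) ≠ 0 := Complex.ofReal_ne_zero.mpr ha.ne'
  intro n
  induction n with
  | zero =>
    intro s hs
    have hs' : 0 < s.re := by simpa using hs
    have hFE := FE a ha s hs'
    rw [← fFE_zero_eq a ha s, ← fFE_zero_eq a ha (s + 1)] at hFE
    show (-Complex.I * (s + 1) * fFE a 0 (s + 1) + Complex.I * Complex.exp (Complex.I * a)) / a
      = fFE a 0 s
    rw [← hFE]
    field_simp
  | succ n ih =>
    intro s hs
    have h1 : fFE a (n + 1) (s + 1) = fFE a n (s + 1) := by
      apply ih
      simp only [Complex.add_re, Complex.one_re] at *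
      push_cast at hs ⊢
      linarith
    show (-Complex.I * (s + 1) * fFE a (n + 1) (s + 1) + Complex.I * Complex.exp (Complex.I * a)) / a
      = (-Complex.I * (s + 1) * fFE a n (s + 1) + Complex.I * Complex.exp (Complex.I * a)) / a
    rw [h1]

lemma fFE_mono_eq (a : ℝ) (ha : 0 < a) :
    ∀ n m : ℕ, n ≤ m → ∀ s : ℂ, -(n : ℝ) < s.re → fFE a m s = fFE a n s := by
  intro n m hnm
  induction m, hnm using Nat.le_induction with
  | base => intro s _; rfl
  | succ m hm ih =>
    intro s hs
    rw [fFE_succ_eq a ha m s (lt_of_le_of_lt (by push_cast; simp; exact_mod_cast hm) hs), ih s hs]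

end FFEaux

/-- The function `f(s,a) = a^s ∫_a^∞ e^{iu} u^{-s-1} du`, defined for `Re s > 0`, satisfies
`a f(s,a) = -i(s+1) f(s+1,a) + i e^{ia}` and extends to an entire function of `s`. -/
theorem f_functional_equation_and_entire (a : ℝ) (ha : 0 < a) :
    (∀ s : ℂ, 0 < s.re →
      (a : ℂ) * ((a : ℂ) ^ s * ∫ u in Set.Ioi a, Complex.exp (Complex.I * u) * (u : ℂ) ^ (-s - 1)) =
        -Complex.I * (s + 1) *
            ((a : ℂ) ^ (s + 1) *
              ∫ u in Set.Ioi a, Complex.exp (Complex.I * u) * (u : ℂ) ^ (-(s + 1) - 1)) +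
          Complex.I * Complex.exp (Complex.I * a)) ∧
    ∃ g : ℂ → ℂ, Differentiable ℂ g ∧
      ∀ s : ℂ, 0 < s.re →
        g s = (a : ℂ) ^ s * ∫ u in Set.Ioi a, Complex.exp (Complex.I * u) * (u : ℂ) ^ (-s - 1) := by
  constructor
  · exact fun s hs => FFEaux.FE a ha s hs
  · refine ⟨fun s => FFEaux.fFE a (⌈-s.re⌉₊ + 1) s, ?_, ?_⟩
    · intro s0
      set N := ⌈-s0.re⌉₊ + 1 with hN
      have hNs : -(N : ℝ) < s0.re := by
        have := Nat.le_ceil (-s0.re)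
        push_cast [hN]
        linarith
      have hopen : IsOpen {s : ℂ | -(N : ℝ) < s.re} := isOpen_lt continuous_const Complex.continuous_re
      have heq : ∀ s ∈ {s : ℂ | -(N : ℝ) < s.re},
          FFEaux.fFE a (⌈-s.re⌉₊ + 1) s = FFEaux.fFE a N s := by
        intro s hs
        have h1 : -((⌈-s.re⌉₊ + 1 : ℕ) : ℝ) < s.re := by
          have := Nat.le_ceil (-s.re)
          push_cast
          linarith
        calc FFEaux.fFE a (⌈-s.re⌉₊ + 1) s = FFEaux.fFE a (max (⌈-s.re⌉₊ + 1) N) s :=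
              (FFEaux.fFE_mono_eq a ha _ _ (le_max_left _ _) s h1).symm
          _ = FFEaux.fFE a N s := FFEaux.fFE_mono_eq a ha _ _ (le_max_right _ _) s hs
      have hd : DifferentiableAt ℂ (FFEaux.fFE a N) s0 := FFEaux.fFE_diff a ha N s0 hNs
      refine hd.congr_of_eventuallyEq ?_
      filter_upwards [hopen.mem_nhds hNs] with s hs using heq s hs
    · intro s hs
      have h1 : -((⌈-s.re⌉₊ + 1 : ℕ) : ℝ) < s.re := by
        have := Nat.le_ceil (-s.re)
        push_cast
        linarith
      show FFEaux.fFE a (⌈-s.re⌉₊ + 1) s = _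
      rw [FFEaux.fFE_mono_eq a ha 0 (⌈-s.re⌉₊ + 1) (Nat.zero_le _) s (by simpa using hs),
        FFEaux.fFE_zero_eq a ha s]
end
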